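/- Suppose 𝔰ᵏ_{G₁}(i₁,…,i_k) = 𝔰ᵏ_{G₂}(j₁,…,j_k) via a bijection π of nodes matching rows, and suppose nodes i ∈ V₁ and j = π(i) ∈ V₂ have matching rows. Then for every finite 'pattern' (sequence of initial labels), the number of walks in G₁ ending at i whose node sequence has that pattern equals the number of such walks in G₂ ending at j. -/

import Mathlib

/-- Hereditarily structured labels of refinement depth `l`. -/
def LblT : ℕ → Type
  | 0 => ℕ
  | l + 1 => LblT l × Multiset (LblT l)

variable {V : Type} [Fintype V] [DecidableEq V]

/-- The perfect-aggregation (`𝔰`) label of node `i` at refinement level `l`, starting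
from the base coloring `c`:  level `0` is the base color, and level `l+1` pairs the
previous label with the multiset of previous labels of the neighbors. -/
def sLabel (G : SimpleGraph V) [DecidableRel G.Adj] (c : V → ℕ) :
    (l : ℕ) → V → LblT l
  | 0, i => c i
  | l + 1, i =>
      ((sLabel G c l i, (G.neighborFinset i).val.map (sLabel G c l)) :
        LblT l × Multiset (LblT l))

/-- The base coloring `i ↦ Σ_q q·δ_{i,i_q}` determined by the list of distinguished
nodes `pref = [i₁, …, i_q]` (1-indexed, as in the paper). -/
def baseColor (pref : List V) (i : V) : ℕ :=
  ((List.range pref.length).map fun q => if pref[q]? = some i then q + 1 else 0).sum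

/-- The row of node `i` in the label matrix: its labels at all levels. -/
def sRow (G : SimpleGraph V) [DecidableRel G.Adj] (c : V → ℕ) (i : V) :
    (l : ℕ) → LblT l :=
  fun l => sLabel G c l i

/-- Type of `r`-fold aggregated labels: at depth `0`, a label matrix regarded as the
multiset of its rows; each aggregation step forms a multiset. -/
def AggT : ℕ → Type
  | 0 => Multiset ((l : ℕ) → LblT l)
  | r + 1 => Multiset (AggT r)

/-- The aggregated label `𝔰ᵏ_G(i₁,…,i_q)` where `pref = [i₁,…,i_q]` and `r` further
distinguished nodes remain to be chosen (`r = k - q`). -/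
def sAgg (G : SimpleGraph V) [DecidableRel G.Adj] : (r : ℕ) → List V → AggT r
  | 0, pref => Finset.univ.val.map (fun i => sRow G (baseColor pref) i)
  | r + 1, pref =>
      ((Finset.univ.filter (fun i => i ∉ pref)).val.map
        (fun i => sAgg G r (pref ++ [i])))

/-- The `𝔰ᵏ` fingerprint of the graph `G`. -/
def sFingerprint (G : SimpleGraph V) [DecidableRel G.Adj] (k : ℕ) : AggT k :=
  sAgg G k []

/-- Number of walks starting at `i` whose node sequence realizes the given sequence of
base colors (`pat`). -/
def patCount (G : SimpleGraph V) [DecidableRel G.Adj] (c : V → ℕ) :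
    List ℕ → V → ℕ
  | [], _ => 0
  | [a], i => if c i = a then 1 else 0
  | a :: b :: rest, i =>
      if c i = a then ∑ j ∈ G.neighborFinset i, patCount G c (b :: rest) j else 0

/-- Project a depth-`l` label down to its base color. -/
def proj0 : (l : ℕ) → LblT l → ℕ
  | 0, x => x
  | l + 1, x => proj0 l x.1

lemma proj0_sLabel (G : SimpleGraph V) [DecidableRel G.Adj] (c : V → ℕ) :
    ∀ (l : ℕ) (i : V), proj0 l (sLabel G c l i) = c i
  | 0, _ => rfl
  | l + 1, i => proj0_sLabel G c l i

instance lblDecEq : (l : ℕ) → DecidableEq (LblT l)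
  | 0 => inferInstanceAs (DecidableEq ℕ)
  | l + 1 =>
      letI := lblDecEq l
      inferInstanceAs (DecidableEq (LblT l × Multiset (LblT l)))

/-- Evaluate the walk count of a pattern directly from a label of matching depth. -/
def patEval : (p : List ℕ) → LblT p.length → ℕ
  | [], _ => 0
  | [a], x => if @id ℕ x.1 = a then 1 else 0
  | a :: b :: rest, x =>
      if proj0 (b :: rest).length x.1 = a then
        (x.2.map (patEval (b :: rest))).sum
      else 0

lemma patCount_eq_patEval (G : SimpleGraph V) [DecidableRel G.Adj] (c : V → ℕ) :
    ∀ (p : List ℕ) (i : V), patCount G c p i = patEval p (sLabel G c p.length i)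
  | [], _ => rfl
  | [a], i => by
      show (if c i = a then 1 else 0) = (if @id ℕ (sLabel G c 0 i) = a then 1 else 0)
      rfl
  | a :: b :: rest, i => by
      have hrec : ∀ j : V,
          patCount G c (b :: rest) j =
            patEval (b :: rest) (sLabel G c (b :: rest).length j) :=
        fun j => patCount_eq_patEval G c (b :: rest) j
      show (if c i = a then ∑ j ∈ G.neighborFinset i, patCount G c (b :: rest) j else 0)
          = (if proj0 (b :: rest).length (sLabel G c (b :: rest).length i) = a then
              (((G.neighborFinset i).val.map (sLabel G c (b :: rest).length)).map
                (patEval (b :: rest))).sum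
            else 0)
      rw [proj0_sLabel, Multiset.map_map]
      simp only [Function.comp_def, ← hrec]
      rfl

/-- If the `𝔰ᵏ`-label matrices of `G₁` (with distinguished nodes `v₁`) and `G₂` (with
distinguished nodes `v₂`) match under the node bijection `π`, then for every pattern
of base colors, the numbers of walks with that pattern ending at `i` in `G₁` and at
`π i` in `G₂` agree (a walk ending at a node with pattern `pat` is a walk starting
there with the reversed pattern, the graphs being undirected). -/
theorem matching_labels_preserve_pattern_walk_counts
    {V₁ V₂ : Type} [Fintype V₁] [DecidableEq V₁] [Fintype V₂] [DecidableEq V₂]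
    (G₁ : SimpleGraph V₁) (G₂ : SimpleGraph V₂)
    [DecidableRel G₁.Adj] [DecidableRel G₂.Adj] (k : ℕ)
    (v₁ : Fin k → V₁) (v₂ : Fin k → V₂)
    (hv₁ : Function.Injective v₁) (hv₂ : Function.Injective v₂)
    (π : V₁ ≃ V₂)
    (hmatch : ∀ (i : V₁) (l : ℕ),
      sLabel G₁ (baseColor (List.ofFn v₁)) l i =
        sLabel G₂ (baseColor (List.ofFn v₂)) l (π i)) :
    ∀ (pat : List ℕ) (i : V₁),
      patCount G₁ (baseColor (List.ofFn v₁)) pat.reverse i =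
        patCount G₂ (baseColor (List.ofFn v₂)) pat.reverse (π i) := by
  intro pat i
  rw [patCount_eq_patEval, patCount_eq_patEval, hmatch]
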